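/- Let $\Lambda$ be a nonempty set of finitely additive probabilities on an algebra $\mathcal{A}$, and suppose $V(f) = \inf_{\lambda \in \Lambda} \int u(f)\, d\lambda$ for every act $f \in \mathcal{F}$ (with each $u \circ f$ bounded and measurable). Then for every gamble $\theta$ of the form $\theta = a\delta_f + b\delta_y$ with $a, b \ge 0$, $a + b \le 1$, $f \in \mathcal{F}$, and $y$ a constant act, one has $\sum_g \theta(g) V(g) = \inf_{\lambda \in \Lambda} \int \big(\sum_g \theta(g) u(g(\omega))\big) d\lambda(\omega)$; moreover, if $\theta \ge_u \eta$ (state-by-state dominance of conditional utilities) and $\theta$ has this two-point form, then $\sum_g \theta(g)V(g) \ge \sum_g \eta(g)V(g)$. -/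

import Mathlib

open MeasureTheory

/-- An algebra of subsets of `Ω`. -/
structure SetAlgebra (Ω : Type*) where
  sets : Set (Set Ω)
  empty_mem : ∅ ∈ sets
  compl_mem : ∀ A ∈ sets, Aᶜ ∈ sets
  union_mem : ∀ A ∈ sets, ∀ B ∈ sets, A ∪ B ∈ sets

/-- A finitely additive probability on an algebra of sets. -/
structure FinAddProb {Ω : Type*} (𝒜 : SetAlgebra Ω) where
  toFun : Set Ω → ℝ
  nonneg : ∀ A, 0 ≤ toFun A
  empty : toFun ∅ = 0
  univ : toFun Set.univ = 1
  mono : ∀ A ∈ 𝒜.sets, ∀ B ∈ 𝒜.sets, A ⊆ B → toFun A ≤ toFun B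
  additive : ∀ A ∈ 𝒜.sets, ∀ B ∈ 𝒜.sets, Disjoint A B → toFun (A ∪ B) = toFun A + toFun B

/-- The (Choquet-type) integral of a function `h` with respect to a monotone set
function `m` with `m Ω = 1`: for finitely additive probabilities and bounded measurable
`h` this is the Dunford–Schwartz integral `∫ h dm`. -/
noncomputable def faInt {Ω : Type*} (m : Set Ω → ℝ) (h : Ω → ℝ) : ℝ :=
  (∫ t in Set.Ioi (0 : ℝ), m {ω | t < h ω}) +
    ∫ t in Set.Iio (0 : ℝ), (m {ω | t < h ω} - 1)

/-- `h` is measurable with respect to the algebra `𝒜`. -/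
def AMeasurable {Ω : Type*} (𝒜 : SetAlgebra Ω) (h : Ω → ℝ) : Prop :=
  ∀ t : ℝ, {ω | t < h ω} ∈ 𝒜.sets ∧ {ω | h ω < t} ∈ 𝒜.sets

/-- `h` is bounded. -/
def IsBdd {Ω : Type*} (h : Ω → ℝ) : Prop := ∃ c : ℝ, ∀ ω, |h ω| ≤ c

namespace MeuAux

open Set

variable {Ω : Type*} {𝒜 : SetAlgebra Ω}

lemma univ_mem (𝒜 : SetAlgebra Ω) : (Set.univ : Set Ω) ∈ 𝒜.sets := by
  have h := 𝒜.compl_mem ∅ 𝒜.empty_mem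
  simpa using h

lemma inter_mem (𝒜 : SetAlgebra Ω) {A B : Set Ω} (hA : A ∈ 𝒜.sets) (hB : B ∈ 𝒜.sets) :
    A ∩ B ∈ 𝒜.sets := by
  have h := 𝒜.compl_mem _ (𝒜.union_mem _ (𝒜.compl_mem _ hA) _ (𝒜.compl_mem _ hB))
  simpa [Set.compl_union] using h

lemma biUnion_mem (𝒜 : SetAlgebra Ω) {ι : Type*} (J : Finset ι) (A : ι → Set Ω)
    (h : ∀ i ∈ J, A i ∈ 𝒜.sets) : (⋃ i ∈ J, A i) ∈ 𝒜.sets := by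
  classical
  induction J using Finset.induction_on with
  | empty => simpa using 𝒜.empty_mem
  | @insert _ _ ha ih =>
    rw [Finset.set_biUnion_insert]
    exact 𝒜.union_mem _ (h _ (Finset.mem_insert_self _ _)) _
      (ih fun i hi => h i (Finset.mem_insert_of_mem hi))

lemma biInter_mem (𝒜 : SetAlgebra Ω) {ι : Type*} (J : Finset ι) (A : ι → Set Ω)
    (h : ∀ i ∈ J, A i ∈ 𝒜.sets) : (⋂ i ∈ J, A i) ∈ 𝒜.sets := by
  classical
  induction J using Finset.induction_on with
  | empty => simpa using univ_mem 𝒜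
  | @insert _ _ ha ih =>
    rw [Finset.set_biInter_insert]
    exact inter_mem 𝒜 (h _ (Finset.mem_insert_self _ _))
      (ih fun i hi => h i (Finset.mem_insert_of_mem hi))

lemma le_one (l : FinAddProb 𝒜) {A : Set Ω} (hA : A ∈ 𝒜.sets) : l.toFun A ≤ 1 := by
  have h := l.mono A hA Set.univ (univ_mem 𝒜) (Set.subset_univ A)
  simpa [l.univ] using h

lemma sum_cells (l : FinAddProb 𝒜) {ι : Type*} (J : Finset ι) (A : ι → Set Ω)
    (hmem : ∀ i ∈ J, A i ∈ 𝒜.sets)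
    (hdisj : ∀ i ∈ J, ∀ j ∈ J, i ≠ j → Disjoint (A i) (A j)) :
    l.toFun (⋃ i ∈ J, A i) = ∑ i ∈ J, l.toFun (A i) := by
  classical
  induction J using Finset.induction_on with
  | empty => simpa using l.empty
  | @insert a s ha ih =>
    rw [Finset.set_biUnion_insert, Finset.sum_insert ha]
    have hrest : (⋃ i ∈ s, A i) ∈ 𝒜.sets :=
      biUnion_mem 𝒜 s A fun i hi => hmem i (Finset.mem_insert_of_mem hi)
    have hdisj' : Disjoint (A a) (⋃ i ∈ s, A i) := by
      rw [Set.disjoint_iUnion₂_right]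
      intro i hi
      exact hdisj a (Finset.mem_insert_self _ _) i (Finset.mem_insert_of_mem hi)
        (fun hia => ha (hia ▸ hi))
    rw [l.additive _ (hmem a (Finset.mem_insert_self _ _)) _ hrest hdisj',
      ih (fun i hi => hmem i (Finset.mem_insert_of_mem hi))
        (fun i hi j hj hij => hdisj i (Finset.mem_insert_of_mem hi) j
          (Finset.mem_insert_of_mem hj) hij)]

/-- The "signed indicator" `ψ v t = 1_{t<v} - 1_{t<0}`. -/
noncomputable def psi (v t : ℝ) : ℝ := (if t < v then (1:ℝ) else 0) - if t < 0 then 1 else 0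

lemma psi_eq_of_nonneg {v : ℝ} (hv : 0 ≤ v) :
    psi v = Set.indicator (Set.Ico 0 v) (fun _ => (1:ℝ)) := by
  funext t
  unfold psi
  by_cases h1 : t < 0
  · have h2 : t < v := lt_of_lt_of_le h1 hv
    simp [Set.indicator_apply, h1, h2, not_le.2 h1]
  · by_cases h2 : t < v
    · simp [Set.indicator_apply, h1, h2, not_lt.1 h1]
    · simp [Set.indicator_apply, h1, h2]

lemma psi_eq_of_neg {v : ℝ} (hv : v < 0) :
    psi v = Set.indicator (Set.Ico v 0) (fun _ => (-1:ℝ)) := by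
  funext t
  unfold psi
  by_cases h1 : t < v
  · have h2 : t < 0 := lt_trans h1 hv
    simp [Set.indicator_apply, h1, h2, not_le.2 h1]
  · by_cases h2 : t < 0
    · simp [Set.indicator_apply, h1, h2, not_lt.1 h1]
    · simp [Set.indicator_apply, h1, h2, not_lt.1 h1]

lemma psi_integrable (v : ℝ) : Integrable (psi v) := by
  rcases le_or_gt 0 v with hv | hv
  · rw [psi_eq_of_nonneg hv]
    rw [integrable_indicator_iff measurableSet_Ico]
    refine integrableOn_const (ne_of_lt ?_)
    rw [Real.volume_Ico]
    exact ENNReal.ofReal_lt_top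
  · rw [psi_eq_of_neg hv]
    rw [integrable_indicator_iff measurableSet_Ico]
    refine integrableOn_const (ne_of_lt ?_)
    rw [Real.volume_Ico]
    exact ENNReal.ofReal_lt_top

lemma psi_integral (v : ℝ) : ∫ t : ℝ, psi v t = v := by
  rcases le_or_gt 0 v with hv | hv
  · rw [psi_eq_of_nonneg hv, integral_indicator_const _ measurableSet_Ico]
    rw [measureReal_def, Real.volume_Ico, smul_eq_mul, mul_one, ENNReal.toReal_ofReal (by linarith)]
    ring
  · rw [psi_eq_of_neg hv, integral_indicator_const _ measurableSet_Ico]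
    rw [measureReal_def, Real.volume_Ico, smul_eq_mul, ENNReal.toReal_ofReal (by linarith)]
    ring

/-- The layer function `φ_h(t) = m{t < h} - 1_{t<0}`. -/
noncomputable def phi (l : FinAddProb 𝒜) (h : Ω → ℝ) (t : ℝ) : ℝ :=
  l.toFun {ω | t < h ω} - if t < 0 then 1 else 0

lemma phi_antitoneG (l : FinAddProb 𝒜) {h : Ω → ℝ} (hm : AMeasurable 𝒜 h) :
    Antitone fun t => l.toFun {ω | t < h ω} := by
  intro t t' htt'
  exact l.mono _ (hm t').1 _ (hm t).1 fun ω hω => lt_of_le_of_lt htt' hω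

lemma phi_measurable (l : FinAddProb 𝒜) {h : Ω → ℝ} (hm : AMeasurable 𝒜 h) :
    Measurable (phi l h) := by
  have h1 : Measurable fun t => l.toFun {ω | t < h ω} := (phi_antitoneG l hm).measurable
  have h2 : Measurable fun t : ℝ => if t < 0 then (1:ℝ) else 0 := by
    have : (fun t : ℝ => if t < 0 then (1:ℝ) else 0)
        = Set.indicator (Set.Iio 0) (fun _ => (1:ℝ)) := by
      funext t; by_cases ht : t < 0 <;> simp [Set.indicator_apply, ht]
    rw [this]
    exact measurable_const.indicator measurableSet_Iio
  exact h1.sub h2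

lemma phi_zero_of_ge (l : FinAddProb 𝒜) {h : Ω → ℝ} {c t : ℝ} (hb : ∀ ω, |h ω| ≤ c)
    (hc : 0 ≤ c) (ht : c < t) : phi l h t = 0 := by
  have hemp : {ω | t < h ω} = ∅ := by
    apply Set.eq_empty_iff_forall_notMem.2
    intro ω hω
    exact absurd (lt_of_lt_of_le (lt_trans ht hω) (le_trans (le_abs_self _) (hb ω))) (lt_irrefl _)
  have ht0 : ¬ t < 0 := not_lt.2 (le_trans hc ht.le)
  simp [phi, hemp, l.empty, ht0]

lemma phi_zero_of_lt (l : FinAddProb 𝒜) {h : Ω → ℝ} {c t : ℝ} (hb : ∀ ω, |h ω| ≤ c)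
    (hc : 0 ≤ c) (ht : t < -c) : phi l h t = 0 := by
  have huniv : {ω | t < h ω} = Set.univ := by
    apply Set.eq_univ_of_forall
    intro ω
    have := neg_abs_le (h ω)
    have := hb ω
    show t < h ω
    have : -c ≤ h ω := by
      have h1 : |h ω| ≤ c := hb ω
      linarith [neg_abs_le (h ω)]
    linarith
  have ht0 : t < 0 := lt_of_lt_of_le ht (by linarith)
  simp [phi, huniv, l.univ, ht0]

lemma phi_abs_le (l : FinAddProb 𝒜) {h : Ω → ℝ} (hm : AMeasurable 𝒜 h) (t : ℝ) :
    |phi l h t| ≤ 1 := by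
  have h0 : 0 ≤ l.toFun {ω | t < h ω} := l.nonneg _
  have h1 : l.toFun {ω | t < h ω} ≤ 1 := le_one l (hm t).1
  unfold phi
  rw [abs_le]
  by_cases ht : t < 0 <;> simp [ht] <;> constructor <;> linarith

lemma phi_integrable (l : FinAddProb 𝒜) {h : Ω → ℝ} (hbd : IsBdd h) (hm : AMeasurable 𝒜 h) :
    Integrable (phi l h) := by
  obtain ⟨c0, hc0⟩ := hbd
  set c := max c0 0 with hc
  have hb : ∀ ω, |h ω| ≤ c := fun ω => le_trans (hc0 ω) (le_max_left _ _)
  have hcpos : (0:ℝ) ≤ c := le_max_right _ _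
  apply Integrable.mono' (g := Set.indicator (Set.Icc (-c) c) fun _ => (1:ℝ))
  · rw [integrable_indicator_iff measurableSet_Icc]
    refine integrableOn_const (ne_of_lt ?_)
    rw [Real.volume_Icc]
    exact ENNReal.ofReal_lt_top
  · exact (phi_measurable l hm).aestronglyMeasurable
  · refine Filter.Eventually.of_forall fun t => ?_
    rw [Real.norm_eq_abs]
    by_cases htIcc : t ∈ Set.Icc (-c) c
    · rw [Set.indicator_of_mem htIcc]
      exact phi_abs_le l hm t
    · rw [Set.indicator_of_notMem htIcc]
      rw [Set.mem_Icc, not_and_or] at htIcc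
      rcases htIcc with h1 | h2
      · rw [phi_zero_of_lt l hb hcpos (not_le.1 h1), abs_zero]
      · rw [phi_zero_of_ge l hb hcpos (not_le.1 h2), abs_zero]

lemma faInt_rep (l : FinAddProb 𝒜) {h : Ω → ℝ} (hbd : IsBdd h) (hm : AMeasurable 𝒜 h) :
    faInt l.toFun h = ∫ t : ℝ, phi l h t := by
  have hint := phi_integrable l hbd hm
  have h1 : IntegrableOn (phi l h) (Set.Iio 0) := hint.integrableOn
  have h2 : IntegrableOn (phi l h) (Set.Ici 0) := hint.integrableOn
  rw [← intervalIntegral.integral_Iio_add_Ici h1 h2]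
  have e1 : ∫ t in Set.Iio (0:ℝ), phi l h t = ∫ t in Set.Iio (0:ℝ), (l.toFun {ω | t < h ω} - 1) := by
    apply setIntegral_congr_fun measurableSet_Iio
    intro t ht
    simp [phi, Set.mem_Iio.1 ht]
  have e2 : ∫ t in Set.Ici (0:ℝ), phi l h t = ∫ t in Set.Ioi (0:ℝ), l.toFun {ω | t < h ω} := by
    rw [MeasureTheory.integral_Ici_eq_integral_Ioi]
    apply setIntegral_congr_fun measurableSet_Ioi
    intro t ht
    simp [phi, not_lt.2 (le_of_lt (Set.mem_Ioi.1 ht))]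
  rw [e1, e2, faInt, add_comm]

lemma faInt_mono (l : FinAddProb 𝒜) {h g : Ω → ℝ} (hbd : IsBdd h) (hm : AMeasurable 𝒜 h)
    (gbd : IsBdd g) (gm : AMeasurable 𝒜 g) (hle : ∀ ω, h ω ≤ g ω) :
    faInt l.toFun h ≤ faInt l.toFun g := by
  rw [faInt_rep l hbd hm, faInt_rep l gbd gm]
  apply integral_mono (phi_integrable l hbd hm) (phi_integrable l gbd gm)
  intro t
  unfold phi
  apply sub_le_sub_right
  exact l.mono _ (hm t).1 _ (gm t).1 fun ω hω => lt_of_lt_of_le hω (hle ω)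
lemma ameasurable_const (𝒜 : SetAlgebra Ω) (k : ℝ) : AMeasurable 𝒜 (fun _ : Ω => k) := by
  intro t
  constructor
  · by_cases ht : t < k
    · have : {ω : Ω | t < k} = Set.univ := Set.eq_univ_of_forall fun ω => ht
      rw [this]; exact univ_mem 𝒜
    · have : {ω : Ω | t < k} = ∅ := Set.eq_empty_iff_forall_notMem.2 fun ω hω => ht hω
      rw [this]; exact 𝒜.empty_mem
  · by_cases ht : k < t
    · have : {ω : Ω | k < t} = Set.univ := Set.eq_univ_of_forall fun ω => ht
      rw [this]; exact univ_mem 𝒜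
    · have : {ω : Ω | k < t} = ∅ := Set.eq_empty_iff_forall_notMem.2 fun ω hω => ht hω
      rw [this]; exact 𝒜.empty_mem

lemma ameasurable_add_const {h : Ω → ℝ} (hm : AMeasurable 𝒜 h) (c0 : ℝ) :
    AMeasurable 𝒜 (fun ω => h ω + c0) := by
  intro t
  constructor
  · have : {ω | t < h ω + c0} = {ω | t - c0 < h ω} := by
      ext ω; simp [sub_lt_iff_lt_add]
    rw [this]; exact (hm (t - c0)).1
  · have : {ω | h ω + c0 < t} = {ω | h ω < t - c0} := by
      ext ω; simp [lt_sub_iff_add_lt]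
    rw [this]; exact (hm (t - c0)).2

lemma ameasurable_const_mul {h : Ω → ℝ} (hm : AMeasurable 𝒜 h) {a : ℝ} (ha : 0 < a) :
    AMeasurable 𝒜 (fun ω => a * h ω) := by
  intro t
  constructor
  · have : {ω | t < a * h ω} = {ω | t / a < h ω} := by
      ext ω; simp [div_lt_iff₀ ha, mul_comm]
    rw [this]; exact (hm (t / a)).1
  · have : {ω | a * h ω < t} = {ω | h ω < t / a} := by
      ext ω; simp [lt_div_iff₀ ha, mul_comm]
    rw [this]; exact (hm (t / a)).2

lemma isBdd_add_const {h : Ω → ℝ} (hbd : IsBdd h) (c0 : ℝ) : IsBdd (fun ω => h ω + c0) := by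
  obtain ⟨c, hc⟩ := hbd
  exact ⟨c + |c0|, fun ω => (abs_add_le _ _).trans (add_le_add (hc ω) le_rfl)⟩

lemma isBdd_const_mul {h : Ω → ℝ} (hbd : IsBdd h) (a : ℝ) : IsBdd (fun ω => a * h ω) := by
  obtain ⟨c, hc⟩ := hbd
  exact ⟨|a| * c, fun ω => by
    rw [abs_mul]
    exact mul_le_mul_of_nonneg_left (hc ω) (abs_nonneg a)⟩

lemma faInt_add_const (l : FinAddProb 𝒜) {h : Ω → ℝ} (hbd : IsBdd h) (hm : AMeasurable 𝒜 h)
    (c0 : ℝ) : faInt l.toFun (fun ω => h ω + c0) = faInt l.toFun h + c0 := by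
  rw [faInt_rep l (isBdd_add_const hbd c0) (ameasurable_add_const hm c0), faInt_rep l hbd hm]
  have key : ∀ t, phi l (fun ω => h ω + c0) t = phi l h (t - c0) + psi c0 t := by
    intro t
    unfold phi psi
    have hset : {ω | t < h ω + c0} = {ω | t - c0 < h ω} := by
      ext ω; simp [sub_lt_iff_lt_add]
    rw [hset]
    have h2 : t - c0 < 0 ↔ t < c0 := sub_neg
    by_cases ht : t < c0 <;> by_cases ht0 : t < 0 <;>
      simp [ht, ht0, h2.2, h2] <;> ring
  calc (∫ t : ℝ, phi l (fun ω => h ω + c0) t)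
      = ∫ t : ℝ, (phi l h (t - c0) + psi c0 t) := by simp only [key]
    _ = (∫ t : ℝ, phi l h (t - c0)) + ∫ t : ℝ, psi c0 t :=
        integral_add ((phi_integrable l hbd hm).comp_sub_right c0) (psi_integrable c0)
    _ = (∫ t : ℝ, phi l h t) + c0 := by
        rw [MeasureTheory.integral_sub_right_eq_self (phi l h) c0, psi_integral]

lemma faInt_const_mul (l : FinAddProb 𝒜) {h : Ω → ℝ} (hbd : IsBdd h) (hm : AMeasurable 𝒜 h)
    {a : ℝ} (ha : 0 < a) : faInt l.toFun (fun ω => a * h ω) = a * faInt l.toFun h := by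
  rw [faInt_rep l (isBdd_const_mul hbd a) (ameasurable_const_mul hm ha), faInt_rep l hbd hm]
  have key : ∀ t, phi l (fun ω => a * h ω) t = phi l h (t / a) := by
    intro t
    unfold phi
    have hset : {ω | t < a * h ω} = {ω | t / a < h ω} := by
      ext ω; simp [div_lt_iff₀ ha, mul_comm]
    have hlt : t / a < 0 ↔ t < 0 := by
      rw [div_lt_iff₀ ha, zero_mul]
    rw [hset]
    by_cases ht : t < 0 <;> simp [ht, hlt.2, hlt]
  calc (∫ t : ℝ, phi l (fun ω => a * h ω) t)
      = ∫ t : ℝ, phi l h (t / a) := by simp only [key]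
    _ = |a| • ∫ t : ℝ, phi l h t := MeasureTheory.Measure.integral_comp_div (phi l h) a
    _ = a * ∫ t : ℝ, phi l h t := by rw [abs_of_pos ha, smul_eq_mul]

lemma faInt_const (l : FinAddProb 𝒜) (k : ℝ) : faInt l.toFun (fun _ : Ω => k) = k := by
  have h0 : faInt l.toFun (fun _ : Ω => (0:ℝ)) = 0 := by
    rw [faInt_rep l ⟨0, fun ω => by simp⟩ (ameasurable_const 𝒜 0)]
    have : ∀ t, phi l (fun _ : Ω => (0:ℝ)) t = 0 := by
      intro t
      unfold phi
      by_cases ht : t < (0:ℝ)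
      · have : {ω : Ω | t < (0:ℝ)} = Set.univ := Set.eq_univ_of_forall fun ω => ht
        simp [this, l.univ, ht]
      · have : {ω : Ω | t < (0:ℝ)} = ∅ := Set.eq_empty_iff_forall_notMem.2 fun ω hω => ht hω
        simp [this, l.empty, ht]
    simp only [this, integral_zero]
  have := faInt_add_const l (h := fun _ : Ω => (0:ℝ)) ⟨0, fun ω => by simp⟩
    (ameasurable_const 𝒜 0) k
  simpa [h0] using this

lemma faInt_affine (l : FinAddProb 𝒜) {h : Ω → ℝ} (hbd : IsBdd h) (hm : AMeasurable 𝒜 h)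
    {a : ℝ} (ha : 0 ≤ a) (c0 : ℝ) :
    faInt l.toFun (fun ω => a * h ω + c0) = a * faInt l.toFun h + c0 := by
  rcases eq_or_lt_of_le ha with rfl | hpos
  · simp only [zero_mul, zero_add]
    exact faInt_const l c0
  · rw [faInt_add_const l (isBdd_const_mul hbd a) (ameasurable_const_mul hm hpos) c0,
      faInt_const_mul l hbd hm hpos]

lemma neg_le_faInt (l : FinAddProb 𝒜) {h : Ω → ℝ} {c : ℝ} (hb : ∀ ω, |h ω| ≤ c)
    (hm : AMeasurable 𝒜 h) : -c ≤ faInt l.toFun h := by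
  have h1 : faInt l.toFun (fun _ : Ω => -c) = -c := faInt_const l (-c)
  rw [← h1]
  exact faInt_mono l ⟨|c|, fun ω => by rw [abs_neg]⟩ (ameasurable_const 𝒜 (-c))
    ⟨c, hb⟩ hm fun ω => by linarith [(abs_le.1 (hb ω)).1]

lemma ciInf_affine {ι : Type*} [Nonempty ι] (x : ι → ℝ) (hb : BddBelow (Set.range x))
    {a : ℝ} (c : ℝ) (ha : 0 ≤ a) : (⨅ i, (a * x i + c)) = a * (⨅ i, x i) + c := by
  obtain ⟨L, hL⟩ := hb
  have hL' : ∀ i, L ≤ x i := fun i => hL (Set.mem_range_self i)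
  have hb : BddBelow (Set.range x) := ⟨L, fun z hz => by obtain ⟨i, rfl⟩ := hz; exact hL' i⟩
  have hb' : BddBelow (Set.range fun i => a * x i + c) := by
    refine ⟨a * L + c, ?_⟩
    rintro _ ⟨i, rfl⟩
    have h' : a * L ≤ a * x i := mul_le_mul_of_nonneg_left (hL' i) ha
    simpa using add_le_add_right h' c
  apply le_antisymm
  · apply le_of_forall_sub_le
    intro ε hε
    rw [sub_le_iff_le_add]
    have hpos : (0:ℝ) < a + 1 := by linarith
    have hlt : (⨅ i, x i) < (⨅ i, x i) + ε / (a + 1) := by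
      have : 0 < ε / (a + 1) := div_pos hε hpos
      linarith
    obtain ⟨i, hi⟩ := exists_lt_of_ciInf_lt hlt
    have h1 : (⨅ i, (a * x i + c)) ≤ a * x i + c := ciInf_le hb' i
    have h2 : a * x i ≤ a * ((⨅ i, x i) + ε / (a + 1)) :=
      mul_le_mul_of_nonneg_left hi.le ha
    have h3 : a * (ε / (a + 1)) ≤ ε := by
      rw [mul_div_assoc', div_le_iff₀ hpos]
      nlinarith
    nlinarith [mul_add a (⨅ i, x i) (ε / (a + 1))]
  · apply le_ciInf
    intro i
    have h' : a * (⨅ i, x i) ≤ a * x i := mul_le_mul_of_nonneg_left (ciInf_le hb i) ha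
    linarith
section Partition

variable {κ : Type*} [Fintype κ] (l : FinAddProb 𝒜) (A : κ → Set Ω) (v : κ → ℝ) (s : Ω → ℝ)

lemma lvl_lt (hcov : ∀ ω, ∃ j, ω ∈ A j) (hval : ∀ j, ∀ ω ∈ A j, s ω = v j) (t : ℝ) :
    {ω | t < s ω} = ⋃ j ∈ Finset.univ.filter (fun j => t < v j), A j := by
  classical
  ext ω
  simp only [Set.mem_setOf_eq, Set.mem_iUnion, Finset.mem_filter, Finset.mem_univ, true_and]
  constructor
  · intro hts
    obtain ⟨j, hj⟩ := hcov ω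
    exact ⟨j, by rw [← hval j ω hj]; exact hts, hj⟩
  · rintro ⟨j, htj, hj⟩
    rw [hval j ω hj]; exact htj

lemma lvl_gt (hcov : ∀ ω, ∃ j, ω ∈ A j) (hval : ∀ j, ∀ ω ∈ A j, s ω = v j) (t : ℝ) :
    {ω | s ω < t} = ⋃ j ∈ Finset.univ.filter (fun j => v j < t), A j := by
  classical
  ext ω
  simp only [Set.mem_setOf_eq, Set.mem_iUnion, Finset.mem_filter, Finset.mem_univ, true_and]
  constructor
  · intro hts
    obtain ⟨j, hj⟩ := hcov ω
    exact ⟨j, by rw [← hval j ω hj]; exact hts, hj⟩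
  · rintro ⟨j, htj, hj⟩
    rw [hval j ω hj]; exact htj

lemma ameasurable_of_partition (hmem : ∀ j, A j ∈ 𝒜.sets) (hcov : ∀ ω, ∃ j, ω ∈ A j)
    (hval : ∀ j, ∀ ω ∈ A j, s ω = v j) : AMeasurable 𝒜 s := by
  intro t
  constructor
  · rw [lvl_lt A v s hcov hval t]
    exact biUnion_mem 𝒜 _ _ fun j _ => hmem j
  · rw [lvl_gt A v s hcov hval t]
    exact biUnion_mem 𝒜 _ _ fun j _ => hmem j

lemma faInt_partition (hmem : ∀ j, A j ∈ 𝒜.sets)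
    (hdisj : ∀ i j, i ≠ j → Disjoint (A i) (A j))
    (hcov : ∀ ω, ∃ j, ω ∈ A j)
    (hval : ∀ j, ∀ ω ∈ A j, s ω = v j) (hbd : IsBdd s) :
    faInt l.toFun s = ∑ j : κ, v j * l.toFun (A j) := by
  classical
  have hm : AMeasurable 𝒜 s := ameasurable_of_partition A v s hmem hcov hval
  rw [faInt_rep l hbd hm]
  have hsum1 : ∑ j : κ, l.toFun (A j) = 1 := by
    have hcells := sum_cells l Finset.univ A (fun j _ => hmem j)
      (fun i _ j _ hij => hdisj i j hij)
    have huniv : (⋃ j ∈ (Finset.univ : Finset κ), A j) = Set.univ := by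
      apply Set.eq_univ_of_forall
      intro ω
      obtain ⟨j, hj⟩ := hcov ω
      simp only [Set.mem_iUnion]
      exact ⟨j, Finset.mem_univ j, hj⟩
    rw [huniv, l.univ] at hcells
    exact hcells.symm
  have key : ∀ t, phi l s t = ∑ j : κ, l.toFun (A j) * psi (v j) t := by
    intro t
    have hG : l.toFun {ω | t < s ω}
        = ∑ j ∈ Finset.univ.filter (fun j => t < v j), l.toFun (A j) := by
      rw [lvl_lt A v s hcov hval t]
      exact sum_cells l _ A (fun j _ => hmem j)
        (fun i _ j _ hij => hdisj i j hij)
    unfold phi psi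
    rw [hG, Finset.sum_filter]
    simp only [mul_sub]
    rw [Finset.sum_sub_distrib]
    congr 1
    · apply Finset.sum_congr rfl
      intro j _
      by_cases hj : t < v j <;> simp [hj]
    · by_cases ht : t < 0
      · simp only [ht, if_true, mul_one, hsum1]
      · simp [ht]
  calc (∫ t : ℝ, phi l s t)
      = ∫ t : ℝ, ∑ j : κ, l.toFun (A j) * psi (v j) t := by simp only [key]
    _ = ∑ j : κ, ∫ t : ℝ, l.toFun (A j) * psi (v j) t :=
        integral_finset_sum _ fun j _ => (psi_integrable (v j)).const_mul _
    _ = ∑ j : κ, v j * l.toFun (A j) := by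
        apply Finset.sum_congr rfl
        intro j _
        rw [MeasureTheory.integral_const_mul, psi_integral]
        ring

end Partition
lemma faInt_sum_le (l : FinAddProb 𝒜) {ι : Type*} [Fintype ι]
    (c : ι → ℝ) (h : ι → Ω → ℝ) (H : Ω → ℝ)
    (hc : ∀ i, 0 ≤ c i)
    (hbd : ∀ i, IsBdd (h i)) (hmeas : ∀ i, AMeasurable 𝒜 (h i))
    (hHbd : IsBdd H) (hHmeas : AMeasurable 𝒜 H)
    (hdom : ∀ ω, (∑ i, c i * h i ω) ≤ H ω) :
    (∑ i, c i * faInt l.toFun (h i)) ≤ faInt l.toFun H := by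
  classical
  apply le_of_forall_sub_le
  intro ε hε
  rw [sub_le_iff_le_add]
  set Csum := ∑ i : ι, c i with hCsumdef
  have hCsum0 : 0 ≤ Csum := Finset.sum_nonneg fun i _ => hc i
  have hCpos : (0:ℝ) < Csum + 1 := by linarith
  set δ := ε / (Csum + 1) with hδdef
  have hδ : 0 < δ := div_pos hε hCpos
  choose B hB using hbd
  set s : ι → Ω → ℝ := fun i ω => δ * ⌊h i ω / δ⌋ with hsdef
  have hs_le : ∀ i ω, s i ω ≤ h i ω := by
    intro i ω
    have h1 : (⌊h i ω / δ⌋ : ℝ) ≤ h i ω / δ := Int.floor_le _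
    calc δ * (⌊h i ω / δ⌋ : ℝ) ≤ δ * (h i ω / δ) := mul_le_mul_of_nonneg_left h1 hδ.le
      _ = h i ω := by field_simp
  have hs_gt : ∀ i ω, h i ω ≤ s i ω + δ := by
    intro i ω
    have h1 : h i ω / δ < (⌊h i ω / δ⌋ : ℝ) + 1 := Int.lt_floor_add_one _
    have h2 : h i ω < ((⌊h i ω / δ⌋ : ℝ) + 1) * δ := (div_lt_iff₀ hδ).1 h1
    have : ((⌊h i ω / δ⌋ : ℝ) + 1) * δ = δ * (⌊h i ω / δ⌋ : ℝ) + δ := by ring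
    show h i ω ≤ δ * (⌊h i ω / δ⌋ : ℝ) + δ
    linarith
  -- profiles
  set Φ : Ω → ι → ℤ := fun ω i => ⌊h i ω / δ⌋ with hΦdef
  have hrange : (Set.range Φ).Finite := by
    apply Set.Finite.subset (Set.Finite.pi
      (fun i => Set.finite_Icc ⌊-B i / δ⌋ ⌊B i / δ⌋))
    rintro _ ⟨ω, rfl⟩
    rw [Set.mem_pi]
    intro i _
    have hBi := abs_le.1 (hB i ω)
    rw [Set.mem_Icc]
    constructor
    · exact Int.floor_mono ((div_le_div_iff_of_pos_right hδ).2 hBi.1)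
    · exact Int.floor_mono ((div_le_div_iff_of_pos_right hδ).2 hBi.2)
  set P : Finset (ι → ℤ) := hrange.toFinset with hPdef
  have hA_mem : ∀ p : P, (Φ ⁻¹' {(p : ι → ℤ)}) ∈ 𝒜.sets := by
    rintro ⟨p, hp⟩
    have heq : Φ ⁻¹' {p} = ⋂ i ∈ (Finset.univ : Finset ι),
        ({ω | h i ω < δ * (p i : ℝ)}ᶜ ∩ {ω | h i ω < δ * ((p i : ℝ) + 1)}) := by
      ext ω
      simp only [Set.mem_preimage, Set.mem_singleton_iff, Set.mem_iInter, Set.mem_inter_iff,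
        Set.mem_compl_iff, Set.mem_setOf_eq, funext_iff, Finset.mem_univ, forall_const]
      apply forall_congr'
      intro i
      rw [show Φ ω i = ⌊h i ω / δ⌋ from rfl]
      rw [Int.floor_eq_iff]
      constructor
      · rintro ⟨h1, h2⟩
        constructor
        · rw [not_lt]
          calc δ * (p i : ℝ) ≤ δ * (h i ω / δ) := mul_le_mul_of_nonneg_left h1 hδ.le
            _ = h i ω := by field_simp
        · have := (div_lt_iff₀ hδ).1 h2
          linarith [this]
      · rintro ⟨h1, h2⟩
        rw [not_lt] at h1
        constructor
        · rw [le_div_iff₀ hδ]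
          linarith
        · rw [div_lt_iff₀ hδ]
          linarith
    rw [heq]
    apply biInter_mem
    intro i _
    exact inter_mem 𝒜 (𝒜.compl_mem _ (hmeas i (δ * (p i : ℝ))).2)
      (hmeas i (δ * ((p i : ℝ) + 1))).2
  have hdisjA : ∀ p q : P, p ≠ q → Disjoint (Φ ⁻¹' {(p : ι → ℤ)}) (Φ ⁻¹' {(q : ι → ℤ)}) := by
    intro p q hpq
    rw [Set.disjoint_left]
    intro ω hωp hωq
    rw [Set.mem_preimage, Set.mem_singleton_iff] at hωp hωq
    exact hpq (Subtype.ext (hωp ▸ hωq ▸ rfl))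
  have hcovA : ∀ ω, ∃ p : P, ω ∈ Φ ⁻¹' {(p : ι → ℤ)} := by
    intro ω
    refine ⟨⟨Φ ω, hrange.mem_toFinset.2 ⟨ω, rfl⟩⟩, ?_⟩
    simp
  have hvalA : ∀ i, ∀ p : P, ∀ ω ∈ Φ ⁻¹' {(p : ι → ℤ)}, s i ω = δ * ((p : ι → ℤ) i : ℝ) := by
    intro i p ω hω
    rw [Set.mem_preimage, Set.mem_singleton_iff] at hω
    show δ * (⌊h i ω / δ⌋ : ℝ) = δ * ((p : ι → ℤ) i : ℝ)
    rw [show ⌊h i ω / δ⌋ = Φ ω i from rfl, hω]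
  have hs_abs : ∀ i ω, |s i ω| ≤ B i + δ := by
    intro i ω
    have h1 := hs_le i ω
    have h2 := hs_gt i ω
    have h3 := abs_le.1 (hB i ω)
    rw [abs_le]
    constructor <;> linarith [h3.1, h3.2]
  have hs_bd : ∀ i, IsBdd (s i) := fun i => ⟨B i + δ, hs_abs i⟩
  have hs_meas : ∀ i, AMeasurable 𝒜 (s i) := fun i =>
    ameasurable_of_partition _ _ _ hA_mem hcovA (hvalA i)
  have heval_i : ∀ i, faInt l.toFun (s i)
      = ∑ p : P, (δ * ((p : ι → ℤ) i : ℝ)) * l.toFun (Φ ⁻¹' {(p : ι → ℤ)}) := fun i =>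
    faInt_partition l _ _ _ hA_mem hdisjA hcovA (hvalA i) (hs_bd i)
  -- the combined simple function
  set S : Ω → ℝ := fun ω => ∑ i : ι, c i * s i ω with hSdef
  have hSval : ∀ p : P, ∀ ω ∈ Φ ⁻¹' {(p : ι → ℤ)},
      S ω = ∑ i : ι, c i * (δ * ((p : ι → ℤ) i : ℝ)) := by
    intro p ω hω
    apply Finset.sum_congr rfl
    intro i _
    rw [hvalA i p ω hω]
  have hS_bd : IsBdd S := by
    refine ⟨∑ i : ι, c i * (B i + δ), fun ω => ?_⟩
    calc |S ω| ≤ ∑ i : ι, |c i * s i ω| := Finset.abs_sum_le_sum_abs _ _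
      _ ≤ ∑ i : ι, c i * (B i + δ) := by
          apply Finset.sum_le_sum
          intro i _
          rw [abs_mul, abs_of_nonneg (hc i)]
          exact mul_le_mul_of_nonneg_left (hs_abs i ω) (hc i)
  have hS_meas : AMeasurable 𝒜 S :=
    ameasurable_of_partition _ (fun p : P => ∑ i : ι, c i * (δ * ((p : ι → ℤ) i : ℝ))) _
      hA_mem hcovA hSval
  have heval_S : faInt l.toFun S
      = ∑ p : P, (∑ i : ι, c i * (δ * ((p : ι → ℤ) i : ℝ))) * l.toFun (Φ ⁻¹' {(p : ι → ℤ)}) :=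
    faInt_partition l _ _ _ hA_mem hdisjA hcovA hSval hS_bd
  -- chain of inequalities
  have step1 : ∀ i, faInt l.toFun (h i) ≤ faInt l.toFun (s i) + δ := by
    intro i
    have hadd : faInt l.toFun (fun ω => s i ω + δ) = faInt l.toFun (s i) + δ :=
      faInt_add_const l (hs_bd i) (hs_meas i) δ
    rw [← hadd]
    exact faInt_mono l ⟨B i, hB i⟩ (hmeas i) (isBdd_add_const (hs_bd i) δ)
      (ameasurable_add_const (hs_meas i) δ) (hs_gt i)
  have step2 : (∑ i : ι, c i * faInt l.toFun (s i)) = faInt l.toFun S := by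
    rw [heval_S]
    simp only [heval_i, Finset.mul_sum]
    rw [Finset.sum_comm]
    apply Finset.sum_congr rfl
    intro p _
    rw [Finset.sum_mul]
    apply Finset.sum_congr rfl
    intro i _
    ring
  have step3 : faInt l.toFun S ≤ faInt l.toFun H := by
    apply faInt_mono l hS_bd hS_meas hHbd hHmeas
    intro ω
    calc S ω ≤ ∑ i : ι, c i * h i ω := by
          apply Finset.sum_le_sum
          intro i _
          exact mul_le_mul_of_nonneg_left (hs_le i ω) (hc i)
      _ ≤ H ω := hdom ω
  have hδC : δ * Csum ≤ ε := by
    rw [hδdef, div_mul_eq_mul_div, div_le_iff₀ hCpos]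
    nlinarith
  calc (∑ i : ι, c i * faInt l.toFun (h i))
      ≤ ∑ i : ι, c i * (faInt l.toFun (s i) + δ) := by
        apply Finset.sum_le_sum
        intro i _
        exact mul_le_mul_of_nonneg_left (step1 i) (hc i)
    _ = (∑ i : ι, c i * faInt l.toFun (s i)) + δ * Csum := by
        simp only [mul_add]
        rw [Finset.sum_add_distrib, ← Finset.sum_mul]
        rw [hCsumdef]
        ring_nf
    _ = faInt l.toFun S + δ * Csum := by rw [step2]
    _ ≤ faInt l.toFun H + δ * Csum := by linarith [step3]
    _ ≤ faInt l.toFun H + ε := by linarith [hδC]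
lemma ameasurable_affine {h : Ω → ℝ} (hm : AMeasurable 𝒜 h) {a : ℝ} (ha : 0 ≤ a) (c0 : ℝ) :
    AMeasurable 𝒜 (fun ω => a * h ω + c0) := by
  rcases eq_or_lt_of_le ha with rfl | hpos
  · have : (fun ω => 0 * h ω + c0) = fun _ : Ω => c0 := by funext ω; ring
    rw [this]
    exact ameasurable_const 𝒜 c0
  · exact ameasurable_add_const (ameasurable_const_mul hm hpos) c0

end MeuAux

open MeuAux in
/-- Sufficiency direction of the MEU characterization. If
`V f = ⨅ λ ∈ Λ, ∫ u(f) dλ` on `F` (with `u ∘ f` bounded and measurable), then for every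
gamble of the two-point form `θ = a·δ_f + b·δ_ȳ` (with `ȳ` a constant act in `F`) the
value of `θ` equals the lower envelope of the integrals of its conditional utility, and
`θ ≥_u η` implies that the value of `θ` is at least the value of any gamble `η`. -/
theorem meu_implies_theta0_coherence {Ω X : Type*} (𝒜 : SetAlgebra Ω)
    (Λ : Set (FinAddProb 𝒜)) (hΛ : Λ.Nonempty)
    (F : Set (Ω → X)) (V : (Ω → X) → ℝ) (u : X → ℝ) (y : X)
    (hyF : (fun _ : Ω => y) ∈ F)
    (hbm : ∀ f ∈ F, IsBdd (fun ω => u (f ω)) ∧ AMeasurable 𝒜 (fun ω => u (f ω)))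
    (hrep : ∀ f ∈ F, V f = ⨅ l : Λ, faInt (l : FinAddProb 𝒜).toFun (fun ω => u (f ω))) :
    ∀ a b : ℝ, 0 ≤ a → 0 ≤ b → a + b ≤ 1 → ∀ f ∈ F,
      (a * V f + b * V (fun _ : Ω => y) =
        ⨅ l : Λ, faInt (l : FinAddProb 𝒜).toFun (fun ω => a * u (f ω) + b * u y)) ∧
      (∀ η : (Ω → X) →₀ ℝ, ↑η.support ⊆ F → (∀ g, 0 ≤ η g) →
        η.sum (fun _ v => v) ≤ 1 →
        (∀ ω : Ω, η.sum (fun g v => v * u (g ω)) ≤ a * u (f ω) + b * u y) →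
        η.sum (fun g v => v * V g) ≤ a * V f + b * V (fun _ : Ω => y)) := by
  intro a b ha hb hab f hf
  haveI : Nonempty ↥Λ := hΛ.to_subtype
  obtain ⟨hfb, hfm⟩ := hbm f hf
  -- lower bounds
  have hbbg : ∀ g ∈ F, BddBelow (Set.range fun l : Λ =>
      faInt (l : FinAddProb 𝒜).toFun (fun ω => u (g ω))) := by
    intro g hg
    obtain ⟨c, hc⟩ := (hbm g hg).1
    refine ⟨-c, ?_⟩
    rintro _ ⟨l, rfl⟩
    exact neg_le_faInt (l : FinAddProb 𝒜) hc (hbm g hg).2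
  have hVy : V (fun _ : Ω => y) = u y := by
    rw [hrep _ hyF]
    have key : ∀ l : Λ, faInt (l : FinAddProb 𝒜).toFun
        (fun ω => u ((fun _ : Ω => y) ω)) = u y :=
      fun l => faInt_const (l : FinAddProb 𝒜) (u y)
    rw [iInf_congr key]
    exact ciInf_const
  have part1 : a * V f + b * V (fun _ : Ω => y) =
      ⨅ l : Λ, faInt (l : FinAddProb 𝒜).toFun (fun ω => a * u (f ω) + b * u y) := by
    have key : ∀ l : Λ, faInt (l : FinAddProb 𝒜).toFun (fun ω => a * u (f ω) + b * u y)
        = a * faInt (l : FinAddProb 𝒜).toFun (fun ω => u (f ω)) + b * u y :=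
      fun l => faInt_affine (l : FinAddProb 𝒜) hfb hfm ha (b * u y)
    rw [hVy, hrep f hf, iInf_congr key]
    exact (ciInf_affine _ (hbbg f hf) (b * u y) ha).symm
  refine ⟨part1, ?_⟩
  intro η hsupp hpos hsum1 hdom
  rw [part1]
  apply le_ciInf
  intro l
  -- bounded and measurable target
  obtain ⟨cf, hcf⟩ := hfb
  have HBdd : IsBdd (fun ω => a * u (f ω) + b * u y) := by
    refine ⟨a * cf + |b * u y|, fun ω => ?_⟩
    calc |a * u (f ω) + b * u y| ≤ |a * u (f ω)| + |b * u y| := abs_add_le _ _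
      _ ≤ a * cf + |b * u y| := by
          rw [abs_mul, abs_of_nonneg ha]
          linarith [mul_le_mul_of_nonneg_left (hcf ω) ha]
  have HMeas : AMeasurable 𝒜 (fun ω => a * u (f ω) + b * u y) :=
    ameasurable_affine hfm ha (b * u y)
  have hdom' : ∀ ω, (∑ g : ↥η.support, η g.1 * u (g.1 ω)) ≤ a * u (f ω) + b * u y := by
    intro ω
    rw [Finset.sum_coe_sort η.support (fun g => η g * u (g ω))]
    exact hdom ω
  have main := faInt_sum_le (l : FinAddProb 𝒜) (ι := ↥η.support)
    (fun g => η g.1) (fun g ω => u (g.1 ω)) (fun ω => a * u (f ω) + b * u y)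
    (fun g => hpos g.1) (fun g => (hbm g.1 (hsupp g.2)).1) (fun g => (hbm g.1 (hsupp g.2)).2)
    HBdd HMeas hdom'
  have hVle : ∀ g : ↥η.support, V g.1 ≤
      faInt (l : FinAddProb 𝒜).toFun (fun ω => u (g.1 ω)) := by
    intro g
    rw [hrep g.1 (hsupp g.2)]
    exact ciInf_le (hbbg g.1 (hsupp g.2)) l
  calc η.sum (fun g v => v * V g)
      = ∑ g ∈ η.support, η g * V g := rfl
    _ = ∑ g : ↥η.support, η g.1 * V g.1 := (Finset.sum_coe_sort _ _).symm
    _ ≤ ∑ g : ↥η.support, η g.1 * faInt (l : FinAddProb 𝒜).toFun (fun ω => u (g.1 ω)) :=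
        Finset.sum_le_sum fun g _ => mul_le_mul_of_nonneg_left (hVle g) (hpos g.1)
    _ ≤ faInt (l : FinAddProb 𝒜).toFun (fun ω => a * u (f ω) + b * u y) := main
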